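/- Let (Ω, 𝓕, P) be a probability space with filtration (𝓕_k) and let f : EuclideanSpace ℝ (Fin n) → ℝ be three times continuously differentiable with ‖D³f(w)‖ ≤ L for all w (the multilinear operator norm of the third Fréchet derivative is uniformly bounded by L). Let (w_k) be 𝓕_k-measurable EuclideanSpace ℝ (Fin n)-valued random variables, let v̄_k be unit vectors (‖v̄_k‖ = 1), and let v_k be random unit-approximation vectors with ‖v_k − v̄_k‖ ≤ ε almost surely. For a unit vector v, let q_k(v) denote the unique vector with ⟪q_k(v), u⟫ = D³f(w_k)(u, v, v) for all u. Fix μ_k ∈ [0, μ] and set p̄_k = ∇f(w_k) + μ_k • q_k(v_k), and let p_k be a random update term with E[p_k | 𝓕_k] = p̄_k and E[‖p_k − p̄_k‖^j | 𝓕_k] ≤ σ_j almost surely for j = 2, 3, 4. Assume there exist constants A_j⁽¹⁾, B_j⁽¹⁾, A_j⁽²⁾, B_j⁽²⁾ such that for j = 2, 3, 4, E[‖∇f(w_k)‖^j | 𝓕_k] ≤ A_j⁽¹⁾ + B_j⁽¹⁾‖w_k‖^j and E[‖q_k(v̄_k)‖^j | 𝓕_k] ≤ A_j⁽²⁾ +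 B_j⁽²⁾‖w_k‖^j almost surely. Then there exist positive constants A_j, B_j (depending only on L, μ, ε, σ_j and the assumed constants) such that E[‖p_k‖^j | 𝓕_k] ≤ A_j + B_j ‖w_k‖^j almost surely for j = 2, 3, 4. -/

import Mathlib

open MeasureTheory Filter
open scoped RealInnerProductSpace

private lemma three_pow_bound' (j : ℕ) {a b c : ℝ} (ha : 0 ≤ a) (hb : 0 ≤ b) (hc : 0 ≤ c) :
    (a + b + c) ^ j ≤ 3 ^ j * (a ^ j + b ^ j + c ^ j) := by
  have hm : a + b + c ≤ 3 * max a (max b c) := by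
    have h1 := le_max_left a (max b c)
    have h2 := le_trans (le_max_left b c) (le_max_right a (max b c))
    have h3 := le_trans (le_max_right b c) (le_max_right a (max b c))
    linarith
  calc (a + b + c) ^ j ≤ (3 * max a (max b c)) ^ j :=
        pow_le_pow_left₀ (by positivity) hm j
    _ = 3 ^ j * (max a (max b c)) ^ j := mul_pow 3 _ j
    _ ≤ 3 ^ j * (a ^ j + b ^ j + c ^ j) := by
        have hp : (max a (max b c)) ^ j ≤ a ^ j + b ^ j + c ^ j := by
          have pa := pow_nonneg ha j
          have pb := pow_nonneg hb j
          have pc := pow_nonneg hc j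
          rcases max_choice a (max b c) with h | h
          · rw [h]; linarith
          · rw [h]
            rcases max_choice b c with h' | h' <;> rw [h'] <;> linarith
        have h3 : (0:ℝ) ≤ 3 ^ j := by positivity
        nlinarith

set_option maxHeartbeats 1000000 in
/-- The power-iteration update term satisfies the moment bounds required for almost
sure convergence of SGD: with `p̄_k = ∇f(w_k) + μ_k • q_k(v_k)` where
`⟪q_k(v), u⟫ = D³f(w_k)(u, v, v)`, `‖D³f‖ ≤ L`, `‖v_k − v̄_k‖ ≤ ε`, bounded conditional
central moments of `p_k`, and moment bounds on `∇f(w_k)` and `q_k(v̄_k)`, there exist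
positive constants `A_j, B_j` with `E[‖p_k‖ʲ | 𝓕_k] ≤ A_j + B_j ‖w_k‖ʲ`, `j = 2, 3, 4`. -/
theorem stmt_7 {Ω : Type} {m0 : MeasurableSpace Ω} {P : Measure Ω}
    [IsProbabilityMeasure P] (𝓕 : Filtration ℕ m0) {n : ℕ}
    (f : EuclideanSpace ℝ (Fin n) → ℝ) (hf : ContDiff ℝ 3 f)
    (L : ℝ) (hL : ∀ x, ‖iteratedFDeriv ℝ 3 f x‖ ≤ L)
    (w : ℕ → Ω → EuclideanSpace ℝ (Fin n)) (hw : Adapted 𝓕 w)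
    (vbar v : ℕ → Ω → EuclideanSpace ℝ (Fin n))
    (hvbar : ∀ k ω, ‖vbar k ω‖ = 1)
    (ε : ℝ) (hvapprox : ∀ k, ∀ᵐ ω ∂P, ‖v k ω - vbar k ω‖ ≤ ε)
    (q : ℕ → Ω → EuclideanSpace ℝ (Fin n) → EuclideanSpace ℝ (Fin n))
    (hq : ∀ k ω x u, ⟪q k ω x, u⟫ = iteratedFDeriv ℝ 3 f (w k ω) ![u, x, x])
    (μ : ℝ) (μs : ℕ → ℝ) (hμ : ∀ k, μs k ∈ Set.Icc (0 : ℝ) μ)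
    (pbar p : ℕ → Ω → EuclideanSpace ℝ (Fin n))
    (hpbar : ∀ k ω, pbar k ω = gradient f (w k ω) + μs k • q k ω (v k ω))
    (hpint : ∀ k, Integrable (p k) P)
    (hpcond : ∀ k, P[p k | 𝓕 k] =ᵐ[P] pbar k)
    (σ : ℕ → ℝ)
    (hcentint : ∀ k, ∀ j ∈ ({2, 3, 4} : Finset ℕ),
      Integrable (fun ω => ‖p k ω - pbar k ω‖ ^ j) P)
    (hcent : ∀ k, ∀ j ∈ ({2, 3, 4} : Finset ℕ),
      P[fun ω => ‖p k ω - pbar k ω‖ ^ j | 𝓕 k] ≤ᵐ[P] fun _ => σ j)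
    (A₁ B₁ A₂ B₂ : ℕ → ℝ)
    (hgradmom : ∀ k, ∀ j ∈ ({2, 3, 4} : Finset ℕ),
      P[fun ω => ‖gradient f (w k ω)‖ ^ j | 𝓕 k] ≤ᵐ[P]
        fun ω => A₁ j + B₁ j * ‖w k ω‖ ^ j)
    (hqmom : ∀ k, ∀ j ∈ ({2, 3, 4} : Finset ℕ),
      P[fun ω => ‖q k ω (vbar k ω)‖ ^ j | 𝓕 k] ≤ᵐ[P]
        fun ω => A₂ j + B₂ j * ‖w k ω‖ ^ j) :
    ∃ A B : ℕ → ℝ, (∀ j ∈ ({2, 3, 4} : Finset ℕ), 0 < A j ∧ 0 < B j) ∧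
      ∀ k, ∀ j ∈ ({2, 3, 4} : Finset ℕ),
        P[fun ω => ‖p k ω‖ ^ j | 𝓕 k] ≤ᵐ[P] fun ω => A j + B j * ‖w k ω‖ ^ j := by
  have hL0 : 0 ≤ L := le_trans (norm_nonneg _) (hL 0)
  have hμ0 : 0 ≤ μ := le_trans (hμ 0).1 (hμ 0).2
  set C : ℝ := μ * (L * (1 + ε) ^ 2) with hCdef
  have hC0 : 0 ≤ C := by positivity
  refine ⟨fun j => 3 ^ j * (|σ j| + |A₁ j| + C ^ j) + 1, fun j => 3 ^ j * |B₁ j| + 1,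
    fun j _ => ⟨by positivity, by positivity⟩, ?_⟩
  intro k j hj
  -- bound on ‖q k ω (v k ω)‖
  have hqv : ∀ ω, ‖q k ω (v k ω)‖ ≤ L * ‖v k ω‖ ^ 2 := by
    intro ω
    set Q := q k ω (v k ω) with hQdef
    have h1 : ‖Q‖ ^ 2 = ⟪Q, Q⟫ := (real_inner_self_eq_norm_sq Q).symm
    have h2 := hq k ω (v k ω) Q
    have h3 : iteratedFDeriv ℝ 3 f (w k ω) ![Q, v k ω, v k ω]
        ≤ L * (‖Q‖ * (‖v k ω‖ * ‖v k ω‖)) := by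
      have hop := (iteratedFDeriv ℝ 3 f (w k ω)).le_opNorm ![Q, v k ω, v k ω]
      simp only [Fin.prod_univ_three] at hop
      have e2 : ![Q, v k ω, v k ω] 2 = v k ω := rfl
      simp only [Matrix.cons_val_zero, Matrix.cons_val_one, Matrix.head_cons, e2] at hop
      have hL0' : (0:ℝ) ≤ ‖Q‖ * ‖v k ω‖ * ‖v k ω‖ := by positivity
      calc iteratedFDeriv ℝ 3 f (w k ω) ![Q, v k ω, v k ω]
          ≤ ‖iteratedFDeriv ℝ 3 f (w k ω) ![Q, v k ω, v k ω]‖ := le_abs_self _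
        _ ≤ ‖iteratedFDeriv ℝ 3 f (w k ω)‖ * (‖Q‖ * ‖v k ω‖ * ‖v k ω‖) := hop
        _ ≤ L * (‖Q‖ * ‖v k ω‖ * ‖v k ω‖) :=
            mul_le_mul_of_nonneg_right (hL (w k ω)) hL0'
        _ = L * (‖Q‖ * (‖v k ω‖ * ‖v k ω‖)) := by ring
    have h4 : ‖Q‖ ^ 2 ≤ L * (‖Q‖ * (‖v k ω‖ * ‖v k ω‖)) := by
      rw [h1, h2]; exact h3
    rcases eq_or_lt_of_le (norm_nonneg Q) with h0 | h0
    · rw [← h0]; positivity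
    · have : ‖Q‖ * ‖Q‖ ≤ (L * ‖v k ω‖ ^ 2) * ‖Q‖ := by nlinarith
      exact le_of_mul_le_mul_right (by nlinarith) h0
  -- pointwise a.e. bounds
  have hptw : ∀ᵐ ω ∂P, μs k * ‖q k ω (v k ω)‖ ≤ C := by
    filter_upwards [hvapprox k] with ω hv
    have h3 : ‖v k ω‖ ≤ 1 + ε := by
      have : ‖v k ω‖ ≤ ‖vbar k ω‖ + ‖v k ω - vbar k ω‖ := norm_le_insert' _ _
      rw [hvbar k ω] at this; linarith
    have h5 : ‖v k ω‖ ^ 2 ≤ (1 + ε) ^ 2 :=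
      pow_le_pow_left₀ (norm_nonneg _) h3 2
    have h6 : ‖q k ω (v k ω)‖ ≤ L * (1 + ε) ^ 2 :=
      (hqv ω).trans (by nlinarith)
    calc μs k * ‖q k ω (v k ω)‖ ≤ μ * (L * (1 + ε) ^ 2) :=
          mul_le_mul (hμ k).2 h6 (norm_nonneg _) hμ0
      _ = C := rfl
  set X : Ω → ℝ := fun ω => ‖p k ω - pbar k ω‖ ^ j with hXdef
  set Y : Ω → ℝ := fun ω => ‖gradient f (w k ω)‖ ^ j with hYdef
  have hXnn : ∀ ω, 0 ≤ X ω := fun ω => by positivity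
  have hYnn : ∀ ω, 0 ≤ Y ω := fun ω => by positivity
  have hCj : (0:ℝ) ≤ C ^ j := by positivity
  have hnormsmul : ∀ ω, ‖μs k • q k ω (v k ω)‖ = μs k * ‖q k ω (v k ω)‖ := by
    intro ω
    rw [norm_smul, Real.norm_eq_abs, abs_of_nonneg (hμ k).1]
  have hptwj : ∀ᵐ ω ∂P, ‖p k ω‖ ^ j ≤ 3 ^ j * (X ω + Y ω + C ^ j) := by
    filter_upwards [hptw] with ω hω
    have h1 : ‖p k ω‖ ≤ ‖p k ω - pbar k ω‖ + ‖gradient f (w k ω)‖ + C := by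
      have ha : ‖p k ω‖ ≤ ‖p k ω - pbar k ω‖ + ‖pbar k ω‖ := by
        have := norm_add_le (p k ω - pbar k ω) (pbar k ω)
        simpa using this
      have hb : ‖pbar k ω‖ ≤ ‖gradient f (w k ω)‖ + μs k * ‖q k ω (v k ω)‖ := by
        rw [hpbar k ω, ← hnormsmul ω]; exact norm_add_le _ _
      linarith
    calc ‖p k ω‖ ^ j
        ≤ (‖p k ω - pbar k ω‖ + ‖gradient f (w k ω)‖ + C) ^ j :=
          pow_le_pow_left₀ (norm_nonneg _) h1 j
      _ ≤ 3 ^ j * (‖p k ω - pbar k ω‖ ^ j + ‖gradient f (w k ω)‖ ^ j + C ^ j) :=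
          three_pow_bound' j (norm_nonneg _) (norm_nonneg _) hC0
  by_cases hI : Integrable (fun ω => ‖p k ω‖ ^ j) P
  · -- measurability of Y w.r.t. 𝓕 k
    have hgc : Continuous (gradient f) :=
      (InnerProductSpace.toDual ℝ _).symm.continuous.comp (hf.continuous_fderiv (by norm_num))
    have hYsm : StronglyMeasurable[𝓕 k] Y :=
      ((continuous_pow j).comp (continuous_norm.comp hgc)).comp_stronglyMeasurable (hw k).stronglyMeasurable
    -- integrability of Y
    have hYptw : ∀ᵐ ω ∂P, Y ω ≤ 3 ^ j * (X ω + ‖p k ω‖ ^ j + C ^ j) := by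
      filter_upwards [hptw] with ω hω
      have h1 : ‖gradient f (w k ω)‖ ≤ ‖p k ω - pbar k ω‖ + ‖p k ω‖ + C := by
        have ha : ‖pbar k ω‖ ≤ ‖p k ω - pbar k ω‖ + ‖p k ω‖ := by
          have := norm_sub_le (pbar k ω) (p k ω)
          have h := norm_sub_le (p k ω) (pbar k ω)
          have hb : ‖pbar k ω‖ - ‖p k ω‖ ≤ ‖p k ω - pbar k ω‖ := by
            have := norm_sub_norm_le (pbar k ω) (p k ω)
            rw [norm_sub_rev] at this; linarith
          linarith
        have hb : ‖gradient f (w k ω)‖ ≤ ‖pbar k ω‖ + μs k * ‖q k ω (v k ω)‖ := by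
          have : gradient f (w k ω) = pbar k ω - μs k • q k ω (v k ω) := by
            rw [hpbar k ω]; abel
          rw [this, ← hnormsmul ω]
          exact norm_sub_le _ _
        linarith
      calc Y ω ≤ (‖p k ω - pbar k ω‖ + ‖p k ω‖ + C) ^ j :=
            pow_le_pow_left₀ (norm_nonneg _) h1 j
        _ ≤ 3 ^ j * (X ω + ‖p k ω‖ ^ j + C ^ j) :=
            three_pow_bound' j (norm_nonneg _) (norm_nonneg _) hC0
    have hYint : Integrable Y P := by
      refine Integrable.mono'
        (((((hcentint k j hj).add hI).add (integrable_const (C ^ j))).const_mul (3 ^ j)))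
        (hYsm.mono (𝓕.le k)).aestronglyMeasurable ?_
      filter_upwards [hYptw] with ω hω
      rw [Real.norm_eq_abs, abs_of_nonneg (hYnn ω)]
      calc Y ω ≤ 3 ^ j * (X ω + ‖p k ω‖ ^ j + C ^ j) := hω
        _ = 3 ^ j * (X ω + ‖p k ω‖ ^ j + C ^ j) := rfl
    have hYcond : P[Y | 𝓕 k] = Y :=
      condExp_of_stronglyMeasurable (𝓕.le k) hYsm hYint
    have hYbound : ∀ᵐ ω ∂P, Y ω ≤ A₁ j + B₁ j * ‖w k ω‖ ^ j := by
      have := hgradmom k j hj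
      rw [show (fun ω => ‖gradient f (w k ω)‖ ^ j) = Y from rfl, hYcond] at this
      exact this
    -- split the dominating function
    set g2 : Ω → ℝ := (3:ℝ) ^ j • Y + fun _ => (3:ℝ) ^ j * C ^ j with hg2def
    have hg2sm : StronglyMeasurable[𝓕 k] g2 :=
      (hYsm.const_smul ((3:ℝ) ^ j)).add stronglyMeasurable_const
    have hg2int : Integrable g2 P :=
      (hYint.smul ((3:ℝ) ^ j)).add (integrable_const _)
    have hXint : Integrable ((3:ℝ) ^ j • X) P := (hcentint k j hj).smul _
    set g : Ω → ℝ := (3:ℝ) ^ j • X + g2 with hgdef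
    have hgint : Integrable g P := hXint.add hg2int
    have hle : (fun ω => ‖p k ω‖ ^ j) ≤ᵐ[P] g := by
      filter_upwards [hptwj] with ω hω
      simp only [hgdef, hg2def, Pi.add_apply, Pi.smul_apply, smul_eq_mul]
      ring_nf
      ring_nf at hω
      linarith
    have hmono : P[fun ω => ‖p k ω‖ ^ j | 𝓕 k] ≤ᵐ[P] P[g | 𝓕 k] :=
      condExp_mono hI hgint hle
    have hsplit : P[g | 𝓕 k] =ᵐ[P] P[(3:ℝ) ^ j • X | 𝓕 k] + P[g2 | 𝓕 k] :=
      condExp_add hXint hg2int _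
    have hXs : P[(3:ℝ) ^ j • X | 𝓕 k] =ᵐ[P] (3:ℝ) ^ j • P[X | 𝓕 k] :=
      condExp_smul ((3:ℝ) ^ j) X _
    have hg2eq : P[g2 | 𝓕 k] = g2 :=
      condExp_of_stronglyMeasurable (𝓕.le k) hg2sm hg2int
    have hXb := hcent k j hj
    filter_upwards [hmono, hsplit, hXs, hXb, hYbound] with ω h1 h2 h3 h4 h5
    have hwn : (0:ℝ) ≤ ‖w k ω‖ ^ j := by positivity
    have h3j : (0:ℝ) ≤ (3:ℝ) ^ j := by positivity
    have hg2v : g2 ω = 3 ^ j * Y ω + 3 ^ j * C ^ j := by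
      simp [hg2def, smul_eq_mul]
    have hchain : (P[fun ω => ‖p k ω‖ ^ j | 𝓕 k]) ω
        ≤ 3 ^ j * σ j + (3 ^ j * (A₁ j + B₁ j * ‖w k ω‖ ^ j) + 3 ^ j * C ^ j) := by
      have e1 : (P[g | 𝓕 k]) ω = (P[(3:ℝ) ^ j • X | 𝓕 k]) ω + (P[g2 | 𝓕 k]) ω := by
        rw [h2]; rfl
      have e2 : (P[(3:ℝ) ^ j • X | 𝓕 k]) ω = 3 ^ j * (P[X | 𝓕 k]) ω := by
        rw [h3]; simp [smul_eq_mul]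
      have e3 : (P[g2 | 𝓕 k]) ω = 3 ^ j * Y ω + 3 ^ j * C ^ j := by
        rw [hg2eq]; exact hg2v
      have hXle : (P[X | 𝓕 k]) ω ≤ σ j := h4
      have hYle : Y ω ≤ A₁ j + B₁ j * ‖w k ω‖ ^ j := h5
      have := h1
      rw [e1, e2, e3] at this
      nlinarith [mul_le_mul_of_nonneg_left hXle h3j, mul_le_mul_of_nonneg_left hYle h3j]
    have habs1 : 3 ^ j * σ j ≤ 3 ^ j * |σ j| :=
      mul_le_mul_of_nonneg_left (le_abs_self _) h3j
    have habs2 : 3 ^ j * A₁ j ≤ 3 ^ j * |A₁ j| :=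
      mul_le_mul_of_nonneg_left (le_abs_self _) h3j
    have habs3 : 3 ^ j * B₁ j * ‖w k ω‖ ^ j ≤ (3 ^ j * |B₁ j| + 1) * ‖w k ω‖ ^ j := by
      have : 3 ^ j * B₁ j ≤ 3 ^ j * |B₁ j| + 1 := by
        have := mul_le_mul_of_nonneg_left (le_abs_self (B₁ j)) h3j
        linarith
      exact mul_le_mul_of_nonneg_right this hwn
    nlinarith
  · rw [condExp_of_not_integrable hI]
    have h1 : (0:ℝ) ≤ 3 ^ j * (|σ j| + |A₁ j| + C ^ j) := by positivity
    filter_upwards with ω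
    have h2 : (0:ℝ) ≤ (3 ^ j * |B₁ j| + 1) * ‖w k ω‖ ^ j := by positivity
    simp only [Pi.zero_apply]
    linarith
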